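/- arXiv:2107.03628 — 8 statements merged into one kernel-verified Lean document; each statement's English description precedes it below -/
import Mathlib

section
/- Let R be a commutative ring, a ⊆ R an ideal, M an R-module, and N ⊆ M a submodule. If p is a prime ideal weakly associated to M/N (i.e., p is minimal over (N :_R x) for some x ∈ M) and p does not contain (0 :_R N), then p is weakly associated to M. -/
open Submodule

universe u v

variable {R : Type u} [CommRing R]

/-- The small `a`-torsion submodule `Γ_a(M) = {x | ∃ n, a^n • x = 0}`. -/
def smallTorsion (a : Ideal R) (M : Type v) [AddCommGroup M] [Module R M] :
    Submodule R M where
  carrier := {x | ∃ n : ℕ, ∀ r ∈ a ^ n, r • x = 0}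
  zero_mem' := ⟨0, fun r _ => smul_zero r⟩
  add_mem' := by
    rintro x y ⟨n, hn⟩ ⟨m, hm⟩
    refine ⟨n + m, fun r hr => ?_⟩
    have h1 : r ∈ a ^ n := Ideal.pow_le_pow_right (Nat.le_add_right n m) hr
    have h2 : r ∈ a ^ m := Ideal.pow_le_pow_right (Nat.le_add_left m n) hr
    rw [smul_add, hn r h1, hm r h2, add_zero]
  smul_mem' := by
    rintro c x ⟨n, hn⟩
    exact ⟨n, fun r hr => by rw [smul_comm, hn r hr, smul_zero]⟩

/-- The large `a`-torsion submodule `Γ̄_a(M) = {x | a ⊆ √(0 : x)}`. -/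
def largeTorsion (a : Ideal R) (M : Type v) [AddCommGroup M] [Module R M] :
    Submodule R M where
  carrier := {x | ∀ r ∈ a, ∃ n : ℕ, r ^ n • x = 0}
  zero_mem' := fun r _ => ⟨0, smul_zero _⟩
  add_mem' := by
    rintro x y hx hy r hr
    obtain ⟨n, hn⟩ := hx r hr
    obtain ⟨m, hm⟩ := hy r hr
    refine ⟨n + m, ?_⟩
    have hx' : r ^ (n + m) • x = 0 := by
      rw [pow_add, mul_comm, mul_smul, hn, smul_zero]
    have hy' : r ^ (n + m) • y = 0 := by
      rw [pow_add, mul_smul, hm, smul_zero]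
    rw [smul_add, hx', hy', add_zero]
  smul_mem' := by
    rintro c x hx r hr
    obtain ⟨n, hn⟩ := hx r hr
    exact ⟨n, by rw [smul_comm, hn, smul_zero]⟩

/-- The set of weakly associated primes of `M`: primes minimal over the
annihilator `(0 :_R x)` of some `x ∈ M`. -/
def weakAssPrimes (R : Type u) [CommRing R] (M : Type v) [AddCommGroup M]
    [Module R M] : Set (Ideal R) :=
  {p | ∃ x : M, p ∈ Ideal.minimalPrimes (LinearMap.ker (LinearMap.toSpanSingleton R M x))}

/-- The variety of an ideal: the set of primes containing it. -/
def varI (a : Ideal R) : Set (Ideal R) := {p | p.IsPrime ∧ a ≤ p}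

/-- If `p` is a prime weakly associated to `M/N` not containing `(0 :_R N)`,
then `p` is weakly associated to `M`. -/
theorem stmt1 {M : Type v} [AddCommGroup M] [Module R M] (a : Ideal R)
    (N : Submodule R M) (p : Ideal R)
    (hx : ∃ x : M, p ∈ (N.colon (Submodule.span R {x})).minimalPrimes)
    (hann : ¬ N.annihilator ≤ p) :
    p ∈ weakAssPrimes R M := by
  obtain ⟨x, hp⟩ := hx
  obtain ⟨s, hsN, hsp⟩ := SetLike.not_le_iff_exists.mp hann
  rw [Submodule.mem_annihilator] at hsN
  have hpprime : p.IsPrime := hp.1.1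
  refine ⟨s • x, ?_⟩
  set I := N.colon (Submodule.span R {x}) with hI
  set J := LinearMap.ker (LinearMap.toSpanSingleton R M (s • x)) with hJdef
  have hJ : ∀ r : R, r ∈ J ↔ r • (s • x) = 0 := fun r => Iff.rfl
  have hIJ : I ≤ J := by
    intro r hr
    rw [Submodule.mem_colon_span_singleton] at hr
    rw [hJ, smul_comm]
    exact hsN _ hr
  have hJp : J ≤ p := by
    intro r hr
    rw [hJ] at hr
    have hmem : (r * s) • x ∈ N := by
      rw [mul_smul, hr]; exact N.zero_mem
    have hrs : r * s ∈ I := Submodule.mem_colon_span_singleton.mpr hmem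
    exact (hpprime.mem_or_mem (hp.1.2 hrs)).resolve_right hsp
  exact ⟨⟨hpprime, hJp⟩, fun q hq hqp => hp.2 ⟨hq.1, hIJ.trans hq.2⟩ hqp⟩
end

section
/- Let R be a commutative ring, a ⊆ R an ideal, and M an R-module. Then Ass_R(M/Γ̄_a(M)) ⊇ Ass_R(M) \ var(a) and Ass^f_R(M/Γ̄_a(M)) ⊇ Ass^f_R(M) \ var(a). -/
open Submodule

universe u v

variable {R : Type u} [CommRing R]

lemma quot_ann_le (a : Ideal R) {M : Type v} [AddCommGroup M] [Module R M]
    {x : M} {p : Ideal R} (hp : p.IsPrime)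
    (hx : ∀ s : R, s • x = 0 → s ∈ p) {r : R} (hra : r ∈ a) (hrp : r ∉ p)
    {s : R} (hs : s • x ∈ largeTorsion a M) : s ∈ p := by
  obtain ⟨n, hn⟩ := hs r hra
  have h0 : (r ^ n * s) • x = 0 := by rw [mul_smul]; exact hn
  rcases hp.mem_or_mem (hx _ h0) with h | h
  · exact absurd (hp.mem_of_pow_mem n h) hrp
  · exact h

lemma smul_mk_eq_zero_iff (a : Ideal R) {M : Type v} [AddCommGroup M] [Module R M]
    (x : M) (s : R) :
    s • (Submodule.Quotient.mk x : M ⧸ largeTorsion a M) = 0 ↔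
      s • x ∈ largeTorsion a M := by
  rw [← Submodule.Quotient.mk_smul, Submodule.Quotient.mk_eq_zero]

/-- `Ass(M/Γ̄_a(M)) ⊇ Ass(M) \ var(a)` and `Ass^f(M/Γ̄_a(M)) ⊇ Ass^f(M) \ var(a)`. -/
theorem stmt4 (a : Ideal R) (M : Type v) [AddCommGroup M] [Module R M] :
    associatedPrimes R M \ varI a ⊆ associatedPrimes R (M ⧸ largeTorsion a M) ∧
    weakAssPrimes R M \ varI a ⊆ weakAssPrimes R (M ⧸ largeTorsion a M) := by
  constructor
  · rintro p ⟨⟨hp, x, hx⟩, hpa⟩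
    obtain ⟨r, hra, hrp⟩ : ∃ r ∈ a, r ∉ p := by
      by_contra h; push_neg at h; exact hpa ⟨hp, h⟩
    have hxann : ∀ s : R, s • x = 0 → s ∈ p := fun s hs => by
      rw [hx]; exact Ideal.le_radical (Submodule.mem_colon_singleton.mpr ((Submodule.mem_bot R).mpr hs))
    refine ⟨hp, Submodule.Quotient.mk x, le_antisymm ?_ ?_⟩
    · intro s hs
      have hs' : s ∈ ((⊥ : Submodule R M).colon {x}).radical := hx ▸ hs
      obtain ⟨k, hk⟩ := hs'
      refine ⟨k, ?_⟩
      rw [Submodule.mem_colon_singleton, Submodule.mem_bot, smul_mk_eq_zero_iff]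
      have : s ^ k • x = 0 := (Submodule.mem_bot R).mp (Submodule.mem_colon_singleton.mp hk)
      rw [this]; exact (largeTorsion a M).zero_mem
    · intro s hs
      obtain ⟨k, hk⟩ := hs
      rw [Submodule.mem_colon_singleton, Submodule.mem_bot, smul_mk_eq_zero_iff] at hk
      exact hp.mem_of_pow_mem k (quot_ann_le a hp hxann hra hrp hk)
  · rintro p ⟨⟨x, hx⟩, hpa⟩
    have hp : p.IsPrime := hx.1.1
    obtain ⟨r, hra, hrp⟩ : ∃ r ∈ a, r ∉ p := by
      by_contra h; push_neg at h; exact hpa ⟨hp, h⟩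
    have hxann : ∀ s : R, s • x = 0 → s ∈ p := fun s hs => hx.1.2 (by
      rw [LinearMap.mem_ker, LinearMap.toSpanSingleton_apply]; exact hs)
    refine ⟨Submodule.Quotient.mk x, ⟨⟨hp, ?_⟩, ?_⟩⟩
    · intro s hs
      rw [LinearMap.mem_ker, LinearMap.toSpanSingleton_apply,
        smul_mk_eq_zero_iff] at hs
      exact quot_ann_le a hp hxann hra hrp hs
    · intro q hq hqp
      refine hx.2 ⟨hq.1, fun s hs => ?_⟩ hqp
      apply hq.2
      rw [LinearMap.mem_ker, LinearMap.toSpanSingleton_apply,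
        smul_mk_eq_zero_iff]
      rw [LinearMap.mem_ker, LinearMap.toSpanSingleton_apply] at hs
      rw [hs]; exact (largeTorsion a M).zero_mem
end

section
/- Let R be a commutative ring, a ⊆ R an ideal, and M an R-module. Then Γ̄_a(M) = M if and only if Ass^f_R(M) ⊆ var(a). -/
open Submodule

universe u v

variable {R : Type u} [CommRing R]

/-- `Γ̄_a(M) = M` if and only if `Ass^f(M) ⊆ var(a)`. -/
theorem stmt6 (a : Ideal R) (M : Type v) [AddCommGroup M] [Module R M] :
    largeTorsion a M = ⊤ ↔ weakAssPrimes R M ⊆ varI a := by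
  have hmem : ∀ x : M, x ∈ largeTorsion a M ↔
      a ≤ Ideal.radical (LinearMap.ker (LinearMap.toSpanSingleton R M x)) := by
    intro x
    constructor
    · intro hx r hr
      obtain ⟨n, hn⟩ := hx r hr
      exact ⟨n, by simpa [LinearMap.mem_ker, LinearMap.toSpanSingleton_apply] using hn⟩
    · intro h r hr
      obtain ⟨n, hn⟩ := h hr
      exact ⟨n, by simpa [LinearMap.mem_ker, LinearMap.toSpanSingleton_apply] using hn⟩
  constructor
  · intro htop p ⟨x, hp⟩
    have hprime : p.IsPrime := hp.1.1
    refine ⟨hprime, ?_⟩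
    have hx : x ∈ largeTorsion a M := htop ▸ Submodule.mem_top
    have hle := (hmem x).1 hx
    calc a ≤ Ideal.radical (LinearMap.ker (LinearMap.toSpanSingleton R M x)) := hle
      _ ≤ p := hprime.radical_le_iff.mpr hp.1.2
  · intro hass
    rw [eq_top_iff]
    intro x _
    rw [hmem x]
    set I : Ideal R := LinearMap.ker (LinearMap.toSpanSingleton R M x)
    rw [Ideal.radical_eq_sInf]
    intro r hr
    rw [Submodule.mem_sInf]
    rintro q ⟨hqI, hqprime⟩
    obtain ⟨p, hpmin, hpq⟩ := Ideal.exists_minimalPrimes_le hqI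
    have : a ≤ p := (hass ⟨x, hpmin⟩).2
    exact hpq (this hr)
end

section
/- Let R be a commutative ring and a ⊆ R an ideal. Then a is weakly large quasifair (i.e., Ass^f_R(Γ̄_a(M)) = Ass^f_R(M) ∩ var(a) for every R-module M) if and only if for every R-module M, Γ̄_a(M) = 0 is equivalent to Ass^f_R(M) ∩ var(a) = ∅. -/
open Submodule

universe u v

variable {R : Type u} [CommRing R]

lemma annMem {M : Type v} [AddCommGroup M] [Module R M] (x : M) (r : R) :
    r ∈ LinearMap.ker (LinearMap.toSpanSingleton R M x) ↔ r • x = 0 := by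
  simp [LinearMap.mem_ker, LinearMap.toSpanSingleton_apply]

lemma minimal_intermediate {I J p : Ideal R} (hp : p ∈ I.minimalPrimes)
    (hIJ : I ≤ J) (hJp : J ≤ p) : p ∈ J.minimalPrimes :=
by
  refine ⟨⟨hp.1.1, hJp⟩, ?_⟩
  intro q hq hqp
  exact hp.2 ⟨hq.1, hIJ.trans hq.2⟩ hqp

lemma weakAss_empty_iff (M : Type v) [AddCommGroup M] [Module R M] :
    weakAssPrimes R M = ∅ ↔ ∀ x : M, x = 0 := by
  constructor
  · intro h x
    by_contra hx
    have hne : LinearMap.ker (LinearMap.toSpanSingleton R M x) ≠ ⊤ := by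
      intro ht
      have h1 : (1 : R) ∈ LinearMap.ker (LinearMap.toSpanSingleton R M x) := ht ▸ trivial
      rw [annMem, one_smul] at h1
      exact hx h1
    obtain ⟨m, hm, hlem⟩ := Ideal.exists_le_maximal _ hne
    haveI := hm.isPrime
    obtain ⟨p, hp, -⟩ := Ideal.exists_minimalPrimes_le hlem
    have hmem : p ∈ weakAssPrimes R M := ⟨x, hp⟩
    rw [h] at hmem
    exact hmem
  · intro h
    ext p
    simp only [Set.mem_empty_iff_false, iff_false]
    rintro ⟨x, hp⟩
    have hk : LinearMap.ker (LinearMap.toSpanSingleton R M x) = ⊤ := by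
      rw [eq_top_iff]; intro r _; rw [annMem, h x, smul_zero]
    rw [hk] at hp
    exact hp.1.1.ne_top (top_le_iff.mp hp.1.2)

/-- The annihilator of an element of a submodule equals the annihilator of its image. -/
lemma ann_coe {M : Type v} [AddCommGroup M] [Module R M] {N : Submodule R M} (x : N) :
    LinearMap.ker (LinearMap.toSpanSingleton R N x)
      = LinearMap.ker (LinearMap.toSpanSingleton R M (x : M)) := by
  ext r
  rw [annMem, annMem, ← Submodule.coe_smul, Submodule.coe_eq_zero]

lemma weakAss_largeTorsion_subset (a : Ideal R) (M : Type v) [AddCommGroup M] [Module R M] :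
    weakAssPrimes R (largeTorsion a M) ⊆ weakAssPrimes R M ∩ varI a := by
  rintro p ⟨x, hp⟩
  rw [ann_coe] at hp
  refine ⟨⟨(x : M), hp⟩, hp.1.1, fun r hr => ?_⟩
  obtain ⟨n, hn⟩ := x.2 r hr
  have : r ^ n ∈ p := hp.1.2 ((annMem _ _).2 hn)
  exact hp.1.1.mem_of_pow_mem n this

lemma largeTorsion_quotient (a : Ideal R) (M : Type v) [AddCommGroup M] [Module R M] :
    largeTorsion a (M ⧸ largeTorsion a M) = ⊥ := by
  rw [eq_bot_iff]
  rintro y hy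
  obtain ⟨x, rfl⟩ := Submodule.Quotient.mk_surjective _ y
  rw [Submodule.mem_bot, Submodule.Quotient.mk_eq_zero]
  intro r hr
  obtain ⟨n, hn⟩ := hy r hr
  rw [← Submodule.Quotient.mk_smul, Submodule.Quotient.mk_eq_zero] at hn
  obtain ⟨m, hm⟩ := hn r hr
  exact ⟨m + n, by rw [pow_add, mul_smul]; exact hm⟩


/-- `a` is weakly large quasifair iff for every module `M`,
`Γ̄_a(M) = 0 ↔ Ass^f(M) ∩ var(a) = ∅`. -/
theorem stmt7 (a : Ideal R) :
    (∀ (M : Type v) [AddCommGroup M] [Module R M],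
        weakAssPrimes R (largeTorsion a M) = weakAssPrimes R M ∩ varI a) ↔
    (∀ (M : Type v) [AddCommGroup M] [Module R M],
        (largeTorsion a M = ⊥ ↔ weakAssPrimes R M ∩ varI a = ∅)) := by
  constructor
  · intro H M _ _
    rw [← H M]
    constructor
    · intro h
      rw [weakAss_empty_iff]
      intro x
      exact Subtype.ext ((Submodule.mem_bot R).mp (h.le x.2))
    · intro h
      rw [weakAss_empty_iff] at h
      rw [eq_bot_iff]
      intro x hx
      simpa using congrArg Subtype.val (h ⟨x, hx⟩)
  · intro H M _ _
    apply Set.Subset.antisymm (weakAss_largeTorsion_subset a M)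
    rintro p ⟨⟨x, hp⟩, hpprime, hap⟩
    have hquot : weakAssPrimes R (M ⧸ largeTorsion a M) ∩ varI a = ∅ :=
      (H (M ⧸ largeTorsion a M)).mp (largeTorsion_quotient a M)
    have hIJ : LinearMap.ker (LinearMap.toSpanSingleton R M x) ≤
        LinearMap.ker (LinearMap.toSpanSingleton R (M ⧸ largeTorsion a M)
          (Submodule.Quotient.mk x)) := by
      intro r hr
      rw [annMem] at hr ⊢
      rw [← Submodule.Quotient.mk_smul, hr, Submodule.Quotient.mk_zero]
    by_cases hJp : LinearMap.ker (LinearMap.toSpanSingleton R (M ⧸ largeTorsion a M)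
        (Submodule.Quotient.mk x)) ≤ p
    · exfalso
      have hmem : p ∈ weakAssPrimes R (M ⧸ largeTorsion a M) ∩ varI a :=
        ⟨⟨Submodule.Quotient.mk x, minimal_intermediate hp hIJ hJp⟩, hpprime, hap⟩
      rw [hquot] at hmem
      exact hmem
    · obtain ⟨s, hsJ, hsp⟩ := SetLike.not_le_iff_exists.mp hJp
      rw [annMem] at hsJ
      have hsx : s • x ∈ largeTorsion a M := by
        rwa [← Submodule.Quotient.mk_smul, Submodule.Quotient.mk_eq_zero] at hsJ
      have hIK : LinearMap.ker (LinearMap.toSpanSingleton R M x) ≤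
          LinearMap.ker (LinearMap.toSpanSingleton R M (s • x)) := by
        intro r hr
        rw [annMem] at hr ⊢
        rw [smul_comm, hr, smul_zero]
      have hKp : LinearMap.ker (LinearMap.toSpanSingleton R M (s • x)) ≤ p := by
        intro t ht
        rw [annMem] at ht
        have hts : t * s ∈ p := hp.1.2 ((annMem _ _).2 (by rw [mul_smul]; exact ht))
        rcases hpprime.mem_or_mem hts with h | h
        · exact h
        · exact absurd h hsp
      refine ⟨⟨s • x, hsx⟩, ?_⟩
      rw [ann_coe]
      exact minimal_intermediate hp hIK hKp
end

section
/- Let R be a commutative ring, a an ideal, and M an R-module that is weakly a-quasifair, i.e., Ass^f_R(Γ_a(M)) = Ass^f_R(M) ∩ var(a). Then M is weakly large a-quasifair, i.e., Ass^f_R(Γ̄_a(M)) = Ass^f_R(M) ∩ var(a). -/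
open Submodule

universe u v

variable {R : Type u} [CommRing R]

lemma ker_toSpanSingleton_subtype {M : Type v} [AddCommGroup M] [Module R M]
    (N : Submodule R M) (x : N) :
    LinearMap.ker (LinearMap.toSpanSingleton R N x) =
      LinearMap.ker (LinearMap.toSpanSingleton R M x.1) := by
  ext r
  simp [LinearMap.mem_ker, LinearMap.toSpanSingleton_apply, Subtype.ext_iff]

/-- A weakly `a`-quasifair module is weakly large `a`-quasifair. -/
theorem stmt10 (a : Ideal R) (M : Type v) [AddCommGroup M] [Module R M]
    (h : weakAssPrimes R (smallTorsion a M) = weakAssPrimes R M ∩ varI a) :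
    weakAssPrimes R (largeTorsion a M) = weakAssPrimes R M ∩ varI a := by
  ext p
  constructor
  · rintro ⟨x, hp⟩
    rw [ker_toSpanSingleton_subtype] at hp
    have hprime : p.IsPrime := hp.1.1
    have hann := hp.1.2
    refine ⟨⟨x.1, hp⟩, hprime, fun r hr => ?_⟩
    obtain ⟨n, hn⟩ := x.2 r hr
    exact hprime.mem_of_pow_mem n (hann (by
      simpa [LinearMap.mem_ker, LinearMap.toSpanSingleton_apply] using hn))
  · intro hp
    rw [← h] at hp
    obtain ⟨x, hx⟩ := hp
    have hmem : x.1 ∈ largeTorsion a M := by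
      obtain ⟨n, hn⟩ := x.2
      intro r hr
      exact ⟨n, hn _ (Ideal.pow_mem_pow hr n)⟩
    refine ⟨⟨x.1, hmem⟩, ?_⟩
    rw [ker_toSpanSingleton_subtype]
    rw [ker_toSpanSingleton_subtype] at hx
    exact hx
end

section
/- Let R be a commutative ring and a, b ⊆ R ideals such that Γ_a = Γ̄_a and Γ_b = Γ̄_b (as subfunctors of the identity on R-modules). Then Γ_{a+b} = Γ̄_{a+b}. -/
open Submodule

universe u v

variable {R : Type u} [CommRing R]

/-- If `Γ_a = Γ̄_a` and `Γ_b = Γ̄_b`, then `Γ_{a+b} = Γ̄_{a+b}`. -/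
theorem stmt13 (a b : Ideal R)
    (ha : ∀ (M : Type v) [AddCommGroup M] [Module R M],
        smallTorsion a M = largeTorsion a M)
    (hb : ∀ (M : Type v) [AddCommGroup M] [Module R M],
        smallTorsion b M = largeTorsion b M) :
    ∀ (M : Type v) [AddCommGroup M] [Module R M],
      smallTorsion (a + b) M = largeTorsion (a + b) M := by
  intro M _ _
  apply le_antisymm
  · rintro x ⟨n, hn⟩ r hr
    exact ⟨n, hn _ (Ideal.pow_mem_pow hr n)⟩
  · intro x hx
    have hxa : x ∈ smallTorsion a M := by
      rw [ha M]
      exact fun r hr => hx r (Ideal.mem_sup_left hr)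
    have hxb : x ∈ smallTorsion b M := by
      rw [hb M]
      exact fun r hr => hx r (Ideal.mem_sup_right hr)
    obtain ⟨n, hn⟩ := hxa
    obtain ⟨m, hm⟩ := hxb
    refine ⟨n + m, fun r hr => ?_⟩
    have : r ∈ a ^ n ⊔ b ^ m := Ideal.sup_pow_add_le_pow_sup_pow hr
    obtain ⟨s, hs, t, ht, rfl⟩ := Submodule.mem_sup.mp this
    rw [add_smul, hn s hs, hm t ht, add_zero]
end

section
/- Let R be a commutative ring, a an ideal, and M an R-module of bounded large a-torsion, i.e., a^n · Γ̄_a(M) = 0 for some n ∈ ℕ. Then Γ_a(M) = Γ̄_a(M) and M is large a-fair: Ass_R(M/Γ̄_a(M)) = Ass_R(M) \ var(a). -/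
open Submodule

universe u v

variable {R : Type u} [CommRing R]

/-- A module of bounded large `a`-torsion satisfies `Γ_a(M) = Γ̄_a(M)` and is
large `a`-fair. -/
theorem stmt14 (a : Ideal R) (M : Type v) [AddCommGroup M] [Module R M]
    (hbd : ∃ n : ℕ, a ^ n • largeTorsion a M = ⊥) :
    smallTorsion a M = largeTorsion a M ∧
    associatedPrimes R (M ⧸ largeTorsion a M) =
      associatedPrimes R M \ varI a := by
  obtain ⟨n, hn⟩ := hbd
  have hkill : ∀ q ∈ largeTorsion a M, ∀ s ∈ a ^ n, s • q = 0 := by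
    intro q hq s hs
    have : s • q ∈ a ^ n • largeTorsion a M := Submodule.smul_mem_smul hs hq
    rw [hn] at this
    exact (Submodule.mem_bot R).mp this
  have key : ∀ x : M, (∀ r ∈ a, r • x ∈ largeTorsion a M) → x ∈ largeTorsion a M := by
    intro x hx r hr
    refine ⟨n + 1, ?_⟩
    have : (r ^ n) • (r • x) = 0 := hkill _ (hx r hr) _ (Ideal.pow_mem_pow hr n)
    rw [pow_succ]
    rwa [smul_smul] at this
  constructor
  · apply le_antisymm
    · rintro x ⟨m, hm⟩ r hr
      exact ⟨m, hm _ (Ideal.pow_mem_pow hr m)⟩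
    · intro x hx
      exact ⟨n, fun r hr => hkill x hx r hr⟩
  · ext p
    constructor
    · rintro ⟨hp, xb, hxb⟩
      obtain ⟨x, rfl⟩ := Submodule.Quotient.mk_surjective _ xb
      have hanp : ¬ a ≤ p := by
        intro hap
        have hxQ : x ∈ largeTorsion a M := by
          intro r hr
          have : r ∈ ((⊥ : Submodule R (M ⧸ largeTorsion a M)).colon
              {Submodule.Quotient.mk x}).radical := by rw [← hxb]; exact hap hr
          obtain ⟨k, hk⟩ := this
          rw [Submodule.mem_colon_singleton, Submodule.mem_bot, ← Submodule.Quotient.mk_smul,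
            Submodule.Quotient.mk_eq_zero] at hk
          refine ⟨n + k, ?_⟩
          rw [pow_add, mul_smul]
          exact hkill _ hk _ (Ideal.pow_mem_pow hr n)
        have : (Submodule.Quotient.mk x : M ⧸ largeTorsion a M) = 0 :=
          (Submodule.Quotient.mk_eq_zero _).mpr hxQ
        rw [this] at hxb
        apply hp.ne_top
        rw [hxb, Ideal.eq_top_iff_one]
        exact ⟨1, by rw [pow_one, Submodule.mem_colon_singleton, smul_zero]; exact Submodule.zero_mem _⟩
      obtain ⟨r, hra, hrp⟩ := SetLike.not_le_iff_exists.mp hanp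
      refine ⟨⟨hp, ⟨r ^ n • x, ?_⟩⟩, fun h => hanp h.2⟩
      ext s
      constructor
      · intro hs
        obtain ⟨k, hk⟩ : s ∈ ((⊥ : Submodule R (M ⧸ largeTorsion a M)).colon
            {Submodule.Quotient.mk x}).radical := by rw [← hxb]; exact hs
        rw [Submodule.mem_colon_singleton, Submodule.mem_bot, ← Submodule.Quotient.mk_smul,
          Submodule.Quotient.mk_eq_zero] at hk
        refine ⟨k, ?_⟩
        rw [Submodule.mem_colon_singleton, Submodule.mem_bot]
        have h0 : (r ^ n) • (s ^ k • x) = 0 := hkill _ hk _ (Ideal.pow_mem_pow hra n)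
        rw [smul_smul, mul_comm, ← smul_smul] at h0
        exact h0
      · rintro ⟨k, hk⟩
        rw [Submodule.mem_colon_singleton, Submodule.mem_bot] at hk
        have hq0 : (r ^ n * s ^ k) • (Submodule.Quotient.mk x : M ⧸ largeTorsion a M) = 0 := by
          rw [← Submodule.Quotient.mk_smul, mul_comm, mul_smul, hk, Submodule.Quotient.mk_zero]
        have hmem : r ^ n * s ^ k ∈ p := by
          rw [hxb]
          exact Ideal.le_radical (by rw [Submodule.mem_colon_singleton, Submodule.mem_bot]; exact hq0)
        rcases hp.mul_mem_iff_mem_or_mem.mp hmem with h | h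
        · exact absurd (hp.mem_of_pow_mem n h) hrp
        · exact hp.mem_of_pow_mem k h
    · rintro ⟨⟨hp, x, hx⟩, hnv⟩
      have hanp : ¬ a ≤ p := fun h => hnv ⟨hp, h⟩
      obtain ⟨r, hra, hrp⟩ := SetLike.not_le_iff_exists.mp hanp
      refine ⟨hp, ⟨Submodule.Quotient.mk x, ?_⟩⟩
      ext s
      constructor
      · intro hs
        obtain ⟨k, hk⟩ : s ∈ ((⊥ : Submodule R M).colon {x}).radical := by rw [← hx]; exact hs
        rw [Submodule.mem_colon_singleton, Submodule.mem_bot] at hk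
        refine ⟨k, ?_⟩
        rw [Submodule.mem_colon_singleton, Submodule.mem_bot, ← Submodule.Quotient.mk_smul, hk,
          Submodule.Quotient.mk_zero]
      · rintro ⟨k, hk⟩
        rw [Submodule.mem_colon_singleton, Submodule.mem_bot, ← Submodule.Quotient.mk_smul,
          Submodule.Quotient.mk_eq_zero] at hk
        have h0 : (r ^ n) • (s ^ k • x) = 0 := hkill _ hk _ (Ideal.pow_mem_pow hra n)
        rw [smul_smul] at h0
        have hmem : r ^ n * s ^ k ∈ p := by
          rw [hx]
          exact Ideal.le_radical (by rw [Submodule.mem_colon_singleton, Submodule.mem_bot]; exact h0)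
        rcases hp.mul_mem_iff_mem_or_mem.mp hmem with h | h
        · exact absurd (hp.mem_of_pow_mem n h) hrp
        · exact hp.mem_of_pow_mem k h
end

section
/- Let R be a commutative ring and a ⊆ R an ideal with √a maximal. If a is weakly fair (Ass^f_R(M/Γ_a(M)) = Ass^f_R(M) \ var(a) for all M), then a is half-centred: for every R-module M with Ass^f_R(M) ⊆ var(a), one has Γ_a(M) = M. -/
open Submodule

universe u v

variable {R : Type u} [CommRing R]

/-- If `√a` is maximal and `a` is weakly fair, then `a` is half-centred. -/
theorem stmt16 (a : Ideal R) (hmax : a.radical.IsMaximal)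
    (hwf : ∀ (M : Type v) [AddCommGroup M] [Module R M],
        weakAssPrimes R (M ⧸ smallTorsion a M) = weakAssPrimes R M \ varI a) :
    ∀ (M : Type v) [AddCommGroup M] [Module R M],
      weakAssPrimes R M ⊆ varI a → smallTorsion a M = ⊤ := by
  intro M _ _ hsub
  -- The quotient has no weakly associated primes
  have hempty : weakAssPrimes R (M ⧸ smallTorsion a M) = ∅ := by
    rw [hwf M]
    ext p
    simp only [Set.mem_diff, Set.mem_empty_iff_false, iff_false, not_and, not_not]
    exact fun hp => hsub hp
  -- hence the quotient is zero
  by_contra htop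
  obtain ⟨x, hx⟩ : ∃ x : M ⧸ smallTorsion a M, x ≠ 0 := by
    by_contra h
    push_neg at h
    apply htop
    rw [eq_top_iff]
    intro m _
    have := h (Submodule.Quotient.mk m)
    rwa [Submodule.Quotient.mk_eq_zero] at this
  have hker : LinearMap.ker (LinearMap.toSpanSingleton R (M ⧸ smallTorsion a M) x) ≠ ⊤ := by
    intro h
    have : (1 : R) • x = 0 := by
      have : (1 : R) ∈ LinearMap.ker (LinearMap.toSpanSingleton R (M ⧸ smallTorsion a M) x) := by
        rw [h]; trivial
      simpa using this
    simp at this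
    exact hx this
  obtain ⟨m, hm, hle⟩ := Ideal.exists_le_maximal _ hker
  have := hm.isPrime
  obtain ⟨p, hp, _⟩ := Ideal.exists_minimalPrimes_le hle
  have : p ∈ weakAssPrimes R (M ⧸ smallTorsion a M) := ⟨x, hp⟩
  rw [hempty] at this
  exact this
end
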